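/- The Pareto-Lognormal density f(x) = β x^{β−1} e^{−βμ + β²τ²/2} Φᶜ((log x − μ + βτ²)/τ) is nonnegative for all x > 0 and integrates to 1 over (0, ∞). -/

import Mathlib

open MeasureTheory Filter

noncomputable def Phi (x : ℝ) : ℝ :=
  ∫ t in Set.Iic x, (Real.sqrt (2 * Real.pi))⁻¹ * Real.exp (-t ^ 2 / 2)

noncomputable def PhiC (x : ℝ) : ℝ := 1 - Phi x

noncomputable def erf (x : ℝ) : ℝ :=
  (2 / Real.sqrt Real.pi) * ∫ t in (0:ℝ)..x, Real.exp (-t ^ 2)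

noncomputable def erfc (x : ℝ) : ℝ := 1 - erf x


noncomputable def plnPDF (β μ τ x : ℝ) : ℝ :=
  β * x ^ (β - 1) * Real.exp (-β * μ + β ^ 2 * τ ^ 2 / 2) *
    PhiC ((Real.log x - μ + β * τ ^ 2) / τ)

noncomputable def plnCDF (β μ τ x : ℝ) : ℝ :=
  Phi ((Real.log x - μ) / τ) + x ^ β * Real.exp (-β * μ + β ^ 2 * τ ^ 2 / 2) *
    PhiC ((Real.log x - μ + β * τ ^ 2) / τ)

open Real Set Topology


noncomputable def gpdf (t : ℝ) : ℝ := (Real.sqrt (2 * Real.pi))⁻¹ * Real.exp (-t ^ 2 / 2)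

lemma gpdf_cont : Continuous gpdf := by
  unfold gpdf; fun_prop

lemma gpdf_nonneg (t : ℝ) : 0 ≤ gpdf t := by
  unfold gpdf; positivity

lemma gpdf_integrable : Integrable gpdf := by
  have h := (integrable_exp_neg_mul_sq (by norm_num : (0:ℝ) < 1/2)).const_mul
    (Real.sqrt (2 * Real.pi))⁻¹
  refine h.congr (Eventually.of_forall fun t => ?_)
  unfold gpdf; ring_nf

lemma gpdf_total : ∫ t, gpdf t = 1 := by
  unfold gpdf
  rw [integral_const_mul]
  have h : ∫ t : ℝ, Real.exp (-t ^ 2 / 2) = Real.sqrt (Real.pi / (1/2)) := by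
    rw [← integral_gaussian (1/2)]
    congr 1; funext t; ring_nf
  rw [h]
  have h2 : Real.pi / (1/2) = 2 * Real.pi := by ring
  rw [h2, inv_mul_cancel₀ (by positivity)]

lemma Phi_eq (x : ℝ) : Phi x = ∫ t in Set.Iic x, gpdf t := rfl

lemma Phi_add_Ioi (x : ℝ) : Phi x + ∫ t in Set.Ioi x, gpdf t = 1 := by
  rw [Phi_eq, ← Set.compl_Iic (a := x)]
  rw [integral_add_compl measurableSet_Iic gpdf_integrable, gpdf_total]

lemma PhiC_eq (x : ℝ) : PhiC x = ∫ t in Set.Ioi x, gpdf t := by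
  have := Phi_add_Ioi x
  unfold PhiC; linarith

lemma Phi_le_one (x : ℝ) : Phi x ≤ 1 := by
  rw [Phi_eq, ← gpdf_total]
  exact setIntegral_le_integral gpdf_integrable (Eventually.of_forall gpdf_nonneg)

lemma PhiC_nonneg (x : ℝ) : 0 ≤ PhiC x := by
  have := Phi_le_one x; unfold PhiC; linarith

lemma PhiC_le_one (x : ℝ) : PhiC x ≤ 1 := by
  rw [PhiC_eq, ← gpdf_total]
  exact setIntegral_le_integral gpdf_integrable (Eventually.of_forall gpdf_nonneg)

lemma hasDerivAt_Phi (x : ℝ) : HasDerivAt Phi (gpdf x) x := by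
  have heq : Phi = fun y => Phi 0 + ∫ t in (0:ℝ)..y, gpdf t := by
    funext y
    rw [Phi_eq, Phi_eq, ← intervalIntegral.integral_Iic_sub_Iic
      gpdf_integrable.integrableOn gpdf_integrable.integrableOn]
    ring
  rw [heq]
  exact (intervalIntegral.integral_hasDerivAt_right
    gpdf_integrable.intervalIntegrable
    (gpdf_cont.stronglyMeasurableAtFilter _ _) gpdf_cont.continuousAt).const_add _

lemma Phi_tendsto_atTop : Tendsto Phi atTop (𝓝 1) := by
  have h := (aecover_Iic (μ := (volume : Measure ℝ)) (l := atTop)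
    tendsto_id).integral_tendsto_of_countably_generated gpdf_integrable
  rw [gpdf_total] at h
  exact h

lemma Phi_tendsto_atBot : Tendsto Phi atBot (𝓝 0) := by
  have h := (aecover_Ioi (μ := (volume : Measure ℝ)) (l := atBot)
    tendsto_id).integral_tendsto_of_countably_generated gpdf_integrable
  rw [gpdf_total] at h
  have heq : Phi = fun x => 1 - ∫ t in Set.Ioi x, gpdf t := by
    funext x; have := Phi_add_Ioi x; linarith
  rw [heq]
  have := (tendsto_const_nhds (x := (1:ℝ)) (f := atBot)).sub h
  simpa using this

lemma integral_exp_neg_mul_Ioi {t : ℝ} (ht : 0 < t) :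
    ∫ s in Set.Ioi t, Real.exp (-(t * s)) = Real.exp (-(t * t)) / t := by
  have hderiv : ∀ s ∈ Set.Ici t, HasDerivAt (fun s => Real.exp (-(t * s)) / (-t))
      (Real.exp (-(t * s))) s := by
    intro s _
    have h1 : HasDerivAt (fun s : ℝ => -(t * s)) (-t) s := by
      simpa using ((hasDerivAt_id s).const_mul t).fun_neg
    have h2 := (h1.exp).div_const (-t)
    refine h2.congr_deriv ?_
    field_simp
  have hint : IntegrableOn (fun s => Real.exp (-(t * s))) (Set.Ioi t) := by
    have := exp_neg_integrableOn_Ioi t ht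
    refine this.congr_fun (fun s _ => by simp only [neg_mul]) measurableSet_Ioi
  have htend : Tendsto (fun s => Real.exp (-(t * s)) / (-t)) atTop (𝓝 0) := by
    have h3 : Tendsto (fun s : ℝ => -(t * s)) atTop atBot := by
      have := (tendsto_id (α := ℝ) (x := atTop)).const_mul_atTop ht
      exact tendsto_neg_atTop_atBot.comp this
    have := (Real.tendsto_exp_atBot.comp h3).div_const (-t)
    simpa using this
  rw [integral_Ioi_of_hasDerivAt_of_tendsto' hderiv hint htend]
  field_simp
  ring

lemma mills {t : ℝ} (ht : 1 ≤ t) : PhiC t ≤ Real.exp (-t ^ 2 / 2) := by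
  have ht0 : 0 < t := lt_of_lt_of_le one_pos ht
  have hK : (Real.sqrt (2 * Real.pi))⁻¹ ≤ 1 := by
    rw [inv_le_one_iff₀]
    right
    rw [show (1:ℝ) = Real.sqrt 1 from (Real.sqrt_one).symm]
    apply Real.sqrt_le_sqrt
    nlinarith [Real.pi_gt_three]
  have hbound : ∫ s in Set.Ioi t, gpdf s ≤
      ∫ s in Set.Ioi t, Real.exp (t ^ 2 / 2) * Real.exp (-(t * s)) := by
    apply setIntegral_mono_on gpdf_integrable.integrableOn
      (((exp_neg_integrableOn_Ioi t ht0).congr_fun (fun s _ => by rw [neg_mul])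
        measurableSet_Ioi).const_mul _) measurableSet_Ioi
    intro s hs
    unfold gpdf
    rw [← Real.exp_add]
    have h1 : -s ^ 2 / 2 ≤ t ^ 2 / 2 + -(t * s) := by nlinarith [sq_nonneg (s - t)]
    calc (Real.sqrt (2 * Real.pi))⁻¹ * Real.exp (-s ^ 2 / 2)
        ≤ 1 * Real.exp (-s ^ 2 / 2) := by
          apply mul_le_mul_of_nonneg_right hK (Real.exp_nonneg _)
      _ = Real.exp (-s ^ 2 / 2) := one_mul _
      _ ≤ Real.exp (t ^ 2 / 2 + -(t * s)) := Real.exp_le_exp.2 h1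
  rw [PhiC_eq]
  calc (∫ s in Set.Ioi t, gpdf s)
      ≤ ∫ s in Set.Ioi t, Real.exp (t ^ 2 / 2) * Real.exp (-(t * s)) := hbound
    _ = Real.exp (t ^ 2 / 2) * (Real.exp (-(t * t)) / t) := by
        rw [integral_const_mul, integral_exp_neg_mul_Ioi ht0]
    _ ≤ Real.exp (t ^ 2 / 2) * Real.exp (-(t * t)) := by
        apply mul_le_mul_of_nonneg_left _ (Real.exp_nonneg _)
        apply div_le_self (Real.exp_nonneg _) ht
    _ = Real.exp (-t ^ 2 / 2) := by rw [← Real.exp_add]; ring_nf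

lemma key_identity (β μ τ : ℝ) (hτ : 0 < τ) {x : ℝ} (hx : 0 < x) :
    x ^ β * Real.exp (-β * μ + β ^ 2 * τ ^ 2 / 2) *
      gpdf ((Real.log x - μ + β * τ ^ 2) / τ) = gpdf ((Real.log x - μ) / τ) := by
  unfold gpdf
  rw [Real.rpow_def_of_pos hx]
  rw [show Real.exp (Real.log x * β) * Real.exp (-β * μ + β ^ 2 * τ ^ 2 / 2) *
      ((Real.sqrt (2 * Real.pi))⁻¹ *
        Real.exp (-((Real.log x - μ + β * τ ^ 2) / τ) ^ 2 / 2)) =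
      (Real.sqrt (2 * Real.pi))⁻¹ * (Real.exp (Real.log x * β) *
        Real.exp (-β * μ + β ^ 2 * τ ^ 2 / 2) *
        Real.exp (-((Real.log x - μ + β * τ ^ 2) / τ) ^ 2 / 2)) from by ring]
  rw [← Real.exp_add, ← Real.exp_add]
  congr 1
  field_simp
  ring

lemma hasDerivAt_plnCDF (β μ τ : ℝ) (hτ : 0 < τ) {x : ℝ} (hx : 0 < x) :
    HasDerivAt (plnCDF β μ τ) (plnPDF β μ τ x) x := by
  set C := Real.exp (-β * μ + β ^ 2 * τ ^ 2 / 2) with hC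
  have hinner1 : HasDerivAt (fun y : ℝ => (Real.log y - μ) / τ) (x⁻¹ / τ) x :=
    ((Real.hasDerivAt_log hx.ne').sub_const μ).div_const τ
  have hinner2 : HasDerivAt (fun y : ℝ => (Real.log y - μ + β * τ ^ 2) / τ) (x⁻¹ / τ) x :=
    (((Real.hasDerivAt_log hx.ne').sub_const μ).add_const (β * τ ^ 2)).div_const τ
  have hPhi1 : HasDerivAt (fun y : ℝ => Phi ((Real.log y - μ) / τ))
      (gpdf ((Real.log x - μ) / τ) * (x⁻¹ / τ)) x :=
    HasDerivAt.comp x (hasDerivAt_Phi _) hinner1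
  have hPhiC : HasDerivAt (fun y : ℝ => PhiC ((Real.log y - μ + β * τ ^ 2) / τ))
      (-(gpdf ((Real.log x - μ + β * τ ^ 2) / τ) * (x⁻¹ / τ))) x := by
    have := (HasDerivAt.comp x (hasDerivAt_Phi ((Real.log x - μ + β * τ ^ 2) / τ))
      hinner2).const_sub 1
    exact this
  have hrpow : HasDerivAt (fun y : ℝ => y ^ β) (β * x ^ (β - 1)) x :=
    Real.hasDerivAt_rpow_const (Or.inl hx.ne')
  have hprod := (hrpow.mul_const C).mul hPhiC
  have htotal := hPhi1.add hprod
  have hkey := key_identity β μ τ hτ hx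
  rw [← hC] at hkey
  refine htotal.congr_deriv ?_
  symm
  unfold plnPDF
  rw [← hC]
  have hx' : x ≠ 0 := hx.ne'
  field_simp
  nlinarith [hkey, sq_nonneg τ, sq_nonneg x]

lemma plnCDF_tendsto_atTop (β μ τ : ℝ) (hβ : 0 < β) (hτ : 0 < τ) :
    Tendsto (plnCDF β μ τ) atTop (𝓝 1) := by
  set C := Real.exp (-β * μ + β ^ 2 * τ ^ 2 / 2) with hC
  have hC0 : 0 < C := Real.exp_pos _
  have hg : Tendsto (fun x : ℝ => (Real.log x - μ + β * τ ^ 2) / τ) atTop atTop := by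
    apply Tendsto.atTop_div_const hτ
    apply tendsto_atTop_add_const_right
    apply tendsto_atTop_add_const_right
    exact Real.tendsto_log_atTop
  have hh : Tendsto (fun x : ℝ => (Real.log x - μ) / τ) atTop atTop := by
    apply Tendsto.atTop_div_const hτ
    apply tendsto_atTop_add_const_right
    exact Real.tendsto_log_atTop
  have h1 : Tendsto (fun x : ℝ => Phi ((Real.log x - μ) / τ)) atTop (𝓝 1) :=
    Phi_tendsto_atTop.comp hh
  -- the quadratic exponent tends to -infinity
  have hq : Tendsto (fun u : ℝ => β * u - ((u - μ + β * τ ^ 2) / τ) ^ 2 / 2) atTop atBot := by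
    have hlin : Tendsto (fun u : ℝ => -u + (β + 1) * (μ - β * τ ^ 2)) atTop atBot :=
      tendsto_atBot_add_const_right _ _ tendsto_neg_atTop_atBot
    apply tendsto_atBot_mono' atTop ?_ hlin
    · filter_upwards [eventually_ge_atTop (2 * τ ^ 2 * (β + 1) + μ - β * τ ^ 2)] with u hu
      have hτ2 : (0:ℝ) < τ ^ 2 := by positivity
      have hv : 2 * τ ^ 2 * (β + 1) ≤ u - μ + β * τ ^ 2 := by linarith
      have h2 : ((u - μ + β * τ ^ 2) / τ) ^ 2 / 2 ≥ (β + 1) * (u - μ + β * τ ^ 2) := by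
        rw [div_pow, div_div, ge_iff_le, le_div_iff₀ (by positivity)]
        have hv0 : (0:ℝ) ≤ u - μ + β * τ ^ 2 := by nlinarith
        nlinarith [mul_nonneg hv0 (sub_nonneg.2 hv)]
      linarith
  have hB : Tendsto (fun x : ℝ => C * Real.exp
      (β * Real.log x - ((Real.log x - μ + β * τ ^ 2) / τ) ^ 2 / 2)) atTop (𝓝 0) := by
    have := (Real.tendsto_exp_atBot.comp (hq.comp Real.tendsto_log_atTop)).const_mul C
    simpa using this
  have h2 : Tendsto (fun x : ℝ => x ^ β * C *
      PhiC ((Real.log x - μ + β * τ ^ 2) / τ)) atTop (𝓝 0) := by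
    apply squeeze_zero' ?_ ?_ hB
    · filter_upwards [eventually_gt_atTop (0:ℝ)] with x hx
      have := PhiC_nonneg ((Real.log x - μ + β * τ ^ 2) / τ)
      have : (0:ℝ) ≤ x ^ β := Real.rpow_nonneg hx.le β
      positivity
    · filter_upwards [eventually_gt_atTop (0:ℝ), hg.eventually_ge_atTop 1] with x hx hgx
      calc x ^ β * C * PhiC ((Real.log x - μ + β * τ ^ 2) / τ)
          ≤ x ^ β * C * Real.exp (-((Real.log x - μ + β * τ ^ 2) / τ) ^ 2 / 2) := by
            apply mul_le_mul_of_nonneg_left (mills hgx)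
            have : (0:ℝ) ≤ x ^ β := Real.rpow_nonneg hx.le β
            positivity
        _ = C * Real.exp (β * Real.log x - ((Real.log x - μ + β * τ ^ 2) / τ) ^ 2 / 2) := by
            rw [Real.rpow_def_of_pos hx, mul_comm (Real.exp (Real.log x * β)) C, mul_assoc,
              ← Real.exp_add]
            congr 2
            ring
  have := h1.add h2
  rw [add_zero] at this
  exact this

lemma plnCDF_tendsto_zero (β μ τ : ℝ) (hβ : 0 < β) (hτ : 0 < τ) :
    Tendsto (plnCDF β μ τ) (𝓝[>] 0) (𝓝 0) := by
  set C := Real.exp (-β * μ + β ^ 2 * τ ^ 2 / 2) with hC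
  have hC0 : 0 < C := Real.exp_pos _
  have hh : Tendsto (fun x : ℝ => (Real.log x - μ) / τ) (𝓝[>] 0) atBot := by
    apply Tendsto.atBot_div_const hτ
    simpa only [sub_eq_add_neg] using tendsto_atBot_add_const_right _ (-μ) Real.tendsto_log_nhdsGT_zero
  have h1 : Tendsto (fun x : ℝ => Phi ((Real.log x - μ) / τ)) (𝓝[>] 0) (𝓝 0) :=
    Phi_tendsto_atBot.comp hh
  have hrpow : Tendsto (fun x : ℝ => C * x ^ β) (𝓝[>] 0) (𝓝 0) := by
    have hc : ContinuousAt (fun x : ℝ => x ^ β) 0 :=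
      Real.continuousAt_rpow_const 0 β (Or.inr hβ.le)
    have : Tendsto (fun x : ℝ => x ^ β) (𝓝[>] 0) (𝓝 ((0:ℝ) ^ β)) :=
      (hc.tendsto).mono_left nhdsWithin_le_nhds
    rw [Real.zero_rpow hβ.ne'] at this
    simpa using this.const_mul C
  have h2 : Tendsto (fun x : ℝ => x ^ β * C *
      PhiC ((Real.log x - μ + β * τ ^ 2) / τ)) (𝓝[>] 0) (𝓝 0) := by
    apply squeeze_zero' ?_ ?_ hrpow
    · filter_upwards [self_mem_nhdsWithin] with x hx
      have h3 : (0:ℝ) ≤ x ^ β := Real.rpow_nonneg (le_of_lt hx) β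
      have := PhiC_nonneg ((Real.log x - μ + β * τ ^ 2) / τ)
      positivity
    · filter_upwards [self_mem_nhdsWithin] with x hx
      have h3 : (0:ℝ) ≤ x ^ β := Real.rpow_nonneg (le_of_lt hx) β
      calc x ^ β * C * PhiC ((Real.log x - μ + β * τ ^ 2) / τ)
          ≤ x ^ β * C * 1 := by
            apply mul_le_mul_of_nonneg_left (PhiC_le_one _) (by positivity)
        _ = C * x ^ β := by ring
  have := h1.add h2
  rw [add_zero] at this
  exact this

theorem plnPDF_nonneg_integral_one (β μ τ : ℝ) (hβ : 0 < β) (hτ : 0 < τ) :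
    (∀ x : ℝ, 0 < x → 0 ≤ plnPDF β μ τ x) ∧
    ∫ x in Set.Ioi (0:ℝ), plnPDF β μ τ x = 1 := by
  have hnonneg : ∀ x : ℝ, 0 < x → 0 ≤ plnPDF β μ τ x := by
    intro x hx
    unfold plnPDF
    have h1 : (0:ℝ) ≤ x ^ (β - 1) := Real.rpow_nonneg hx.le _
    have h2 := PhiC_nonneg ((Real.log x - μ + β * τ ^ 2) / τ)
    positivity
  refine ⟨hnonneg, ?_⟩
  set F : ℝ → ℝ := fun x => if x ≤ 0 then 0 else plnCDF β μ τ x with hF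
  have hF0 : F 0 = 0 := if_pos le_rfl
  have hFeq : ∀ x : ℝ, 0 < x → F x = plnCDF β μ τ x := fun x hx => if_neg (not_le.2 hx)
  have hcont : ContinuousWithinAt F (Set.Ici 0) 0 := by
    show Tendsto F (𝓝[Set.Ici 0] 0) (𝓝 (F 0))
    rw [hF0, ← Set.Ioi_insert, nhdsWithin_insert, tendsto_sup]
    constructor
    · simpa [hF0] using tendsto_pure_nhds F 0
    · refine (plnCDF_tendsto_zero β μ τ hβ hτ).congr' ?_
      filter_upwards [self_mem_nhdsWithin] with x hx
      exact (hFeq x hx).symm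
  have hderiv : ∀ x ∈ Set.Ioi (0:ℝ), HasDerivAt F (plnPDF β μ τ x) x := by
    intro x hx
    refine (hasDerivAt_plnCDF β μ τ hτ hx).congr_of_eventuallyEq ?_
    filter_upwards [Ioi_mem_nhds hx] with y hy
    exact hFeq y hy
  have hpos : ∀ x ∈ Set.Ioi (0:ℝ), 0 ≤ plnPDF β μ τ x := fun x hx => hnonneg x hx
  have htop : Tendsto F atTop (𝓝 1) := by
    refine (plnCDF_tendsto_atTop β μ τ hβ hτ).congr' ?_
    filter_upwards [eventually_gt_atTop (0:ℝ)] with x hx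
    exact (hFeq x hx).symm
  rw [integral_Ioi_of_hasDerivAt_of_nonneg hcont hderiv hpos htop, hF0, sub_zero]
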